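/- Let S be a finite singleton-rich semigroup, s ∈ S and e, f ∈ E(S). Then es ≪ s, se ≪ s, and esf ≪ s, where x ≪ y means x = x⁺ y x*. -/
import Mathlib


open scoped Classical

/-- φ*(s): the idempotent right identities of `s`. -/
def rIds {S : Type*} [Mul S] (s : S) : Set S := {e | e * e = e ∧ s * e = s}

/-- φ⁺(s): the idempotent left identities of `s`. -/
def lIds {S : Type*} [Mul S] (s : S) : Set S := {e | e * e = e ∧ e * s = s}

/-- `x` is the (necessarily unique) element of a singleton kernel (minimal ideal) of the
subsemigroup `T`: `{x}` is an ideal of `T`, hence the minimal ideal of `T`. -/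
def IsKer {S : Type*} [Semigroup S] (T : Subsemigroup S) (x : S) : Prop :=
  x ∈ T ∧ ∀ a ∈ T, a * x = x ∧ x * a = x

/-- The natural partial order on idempotents: `e ≤ f` iff `ef = fe = e`. -/
def nle {S : Type*} [Mul S] (e f : S) : Prop := e * f = e ∧ f * e = e

/-- The relation `≪`: `s ≪ t` iff `s = s⁺ t s*`, where `sa s = s*` and `pl s = s⁺`. -/
def ll {S : Type*} [Mul S] (sa pl : S → S) (s t : S) : Prop := s = pl s * t * sa s


private lemma aux_r {S : Type*} [Semigroup S] (x : S) {t : S}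
    (ht : t ∈ Subsemigroup.closure (rIds x)) : x * t = x := by
  induction ht using Subsemigroup.closure_induction with
  | mem a ha => exact ha.2
  | mul a b _ _ ha hb => rw [← mul_assoc, ha, hb]

private lemma aux_l {S : Type*} [Semigroup S] (x : S) {t : S}
    (ht : t ∈ Subsemigroup.closure (lIds x)) : t * x = x := by
  induction ht using Subsemigroup.closure_induction with
  | mem a ha => exact ha.2
  | mul a b _ _ ha hb => rw [mul_assoc, hb, ha]

/-- In a finite singleton-rich semigroup, for `s ∈ S` and idempotents `e, f`:
`es ≪ s`, `se ≪ s`, and `esf ≪ s`. -/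
theorem stmt3 {S : Type*} [Semigroup S] [Fintype S] (sa pl : S → S)
    (hsa : ∀ s : S, IsKer (Subsemigroup.closure (rIds s)) (sa s))
    (hpl : ∀ s : S, IsKer (Subsemigroup.closure (lIds s)) (pl s))
    (s e f : S) (he : e * e = e) (hf : f * f = f) :
    ll sa pl (e * s) s ∧ ll sa pl (s * e) s ∧ ll sa pl (e * s * f) s := by
  refine ⟨?_, ?_, ?_⟩
  · set x := e * s with hx
    have hpx : pl x * x = x := aux_l x (hpl x).1
    have hsx : x * sa x = x := aux_r x (hsa x).1
    have hmem : e ∈ Subsemigroup.closure (lIds x) :=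
      Subsemigroup.subset_closure ⟨he, by rw [hx, ← mul_assoc, he]⟩
    have hpe : pl x * e = pl x := ((hpl x).2 e hmem).2
    show x = pl x * s * sa x
    calc x = pl x * x * sa x := by rw [hpx, hsx]
    _ = pl x * s * sa x := by rw [hx, ← mul_assoc, hpe]
  · set x := s * e with hx
    have hpx : pl x * x = x := aux_l x (hpl x).1
    have hsx : x * sa x = x := aux_r x (hsa x).1
    have hmem : e ∈ Subsemigroup.closure (rIds x) :=
      Subsemigroup.subset_closure ⟨he, by rw [hx, mul_assoc, he]⟩
    have hes : e * sa x = sa x := ((hsa x).2 e hmem).1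
    show x = pl x * s * sa x
    calc x = pl x * x * sa x := by rw [hpx, hsx]
    _ = pl x * s * sa x := by rw [hx, ← mul_assoc, mul_assoc (pl x * s), hes]
  · set x := e * s * f with hx
    have hpx : pl x * x = x := aux_l x (hpl x).1
    have hsx : x * sa x = x := aux_r x (hsa x).1
    have hmeml : e ∈ Subsemigroup.closure (lIds x) :=
      Subsemigroup.subset_closure ⟨he, by rw [hx, ← mul_assoc, ← mul_assoc, he]⟩
    have hmemr : f ∈ Subsemigroup.closure (rIds x) :=
      Subsemigroup.subset_closure ⟨hf, by rw [hx, mul_assoc, hf]⟩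
    have hpe : pl x * e = pl x := ((hpl x).2 e hmeml).2
    have hfs : f * sa x = sa x := ((hsa x).2 f hmemr).1
    show x = pl x * s * sa x
    calc x = pl x * x * sa x := by rw [hpx, hsx]
    _ = pl x * s * sa x := by
        rw [hx, ← mul_assoc, ← mul_assoc, hpe, mul_assoc (pl x * s), hfs]
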